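/- arXiv:2109.13003 — 2 statements merged into one kernel-verified Lean document; each statement's English description precedes it below -/
import Mathlib

section
/- Let (Ω,𝓕) be a measurable space, S a Polish space, φ:Ω⇉S a weakly measurable correspondence with nonempty closed values, and K its graph. For every probability measure μ on Ω×S with μ(K)=1 there exists a stochastic kernel Q from Ω to S such that μ = μ^Ω ⊗ Q and Q(φ(ω)|ω)=1 for every ω∈Ω; moreover, Q is unique μ^Ω-almost surely. -/
open MeasureTheory ProbabilityTheory Filter Topology
open scoped ENNReal

section Aux

variable {Ω S : Type*} [MeasurableSpace Ω] [MeasurableSpace S]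
    [TopologicalSpace S] [PolishSpace S] [BorelSpace S]

/-- Measurability of `ω ↦ sInf (T ω)` for `ℕ`-valued set functions. -/
lemma measurable_sInf_nat {T : Ω → Set ℕ}
    (hT : ∀ k, MeasurableSet {ω | k ∈ T ω}) (hTne : ∀ ω, (T ω).Nonempty) :
    Measurable fun ω => sInf (T ω) := by
  apply measurable_to_countable'
  intro k
  have : (fun ω => sInf (T ω)) ⁻¹' {k}
      = {ω | k ∈ T ω} ∩ ⋂ j ∈ Finset.range k, {ω | j ∈ T ω}ᶜ := by
    ext ω
    simp only [Set.mem_preimage, Set.mem_singleton_iff, Set.mem_inter_iff, Set.mem_iInter,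
      Set.mem_compl_iff, Set.mem_setOf_eq, Finset.mem_range]
    constructor
    · rintro rfl
      exact ⟨Nat.sInf_mem (hTne ω), fun j hj => Nat.notMem_of_lt_sInf hj⟩
    · rintro ⟨hk, hlt⟩
      refine le_antisymm (Nat.sInf_le hk) ?_
      by_contra h
      push_neg at h
      exact hlt _ h (Nat.sInf_mem (hTne ω))
  rw [this]
  exact (hT k).inter (MeasurableSet.iInter fun j => MeasurableSet.iInter fun _ => (hT j).compl)

/-- Kuratowski–Ryll-Nardzewski measurable selection. -/
lemma krn_selection (φ : Ω → Set S)
    (hφmeas : ∀ U : Set S, IsOpen U → MeasurableSet {ω | (φ ω ∩ U).Nonempty})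
    (hφne : ∀ ω, (φ ω).Nonempty)
    (hφcl : ∀ ω, IsClosed (φ ω)) :
    ∃ f : Ω → S, Measurable f ∧ ∀ ω, f ω ∈ φ ω := by
  rcases isEmpty_or_nonempty Ω with hΩ | hΩ
  · exact ⟨fun ω => isEmptyElim ω, measurable_of_empty _, fun ω => isEmptyElim ω⟩
  haveI : Nonempty S := ⟨(hφne (Classical.arbitrary Ω)).choose⟩
  letI := TopologicalSpace.upgradeIsCompletelyMetrizable S
  set x : ℕ → S := TopologicalSpace.denseSeq S with hxdef
  have hx : DenseRange x := TopologicalSpace.denseRange_denseSeq S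
  set r : ℕ → ℝ := fun n => (1/2 : ℝ) ^ n with hrdef
  have hrpos : ∀ n, 0 < r n := fun n => by positivity
  -- the recursive sequence of indices
  let g : ℕ → Ω → ℕ := fun n => Nat.rec
    (fun ω => sInf {k | (φ ω ∩ Metric.ball (x k) (r 0)).Nonempty})
    (fun n gn ω =>
      sInf {k | (φ ω ∩ (Metric.ball (x k) (r (n+1)) ∩ Metric.ball (x (gn ω)) (r n))).Nonempty}) n
  have hg0 : ∀ ω, g 0 ω = sInf {k | (φ ω ∩ Metric.ball (x k) (r 0)).Nonempty} := fun _ => rfl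
  have hgs : ∀ n ω, g (n+1) ω =
      sInf {k | (φ ω ∩ (Metric.ball (x k) (r (n+1)) ∩ Metric.ball (x (g n ω)) (r n))).Nonempty} :=
    fun _ _ => rfl
  have hSne0 : ∀ ω, {k | (φ ω ∩ Metric.ball (x k) (r 0)).Nonempty}.Nonempty := by
    intro ω
    obtain ⟨y, hy⟩ := hφne ω
    obtain ⟨k, hk⟩ := hx.exists_dist_lt y (hrpos 0)
    exact ⟨k, y, hy, Metric.mem_ball.2 hk⟩
  have hinv : ∀ n ω, (φ ω ∩ Metric.ball (x (g n ω)) (r n)).Nonempty := by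
    intro n
    induction n with
    | zero => intro ω; exact Nat.sInf_mem (hSne0 ω)
    | succ n ih =>
      intro ω
      obtain ⟨y, hy, hyb⟩ := ih ω
      obtain ⟨k, hk⟩ := hx.exists_dist_lt y (hrpos (n+1))
      have hne : {k | (φ ω ∩ (Metric.ball (x k) (r (n+1))
          ∩ Metric.ball (x (g n ω)) (r n))).Nonempty}.Nonempty :=
        ⟨k, y, hy, Metric.mem_ball.2 hk, hyb⟩
      have := Nat.sInf_mem hne
      rw [← hgs n ω] at this
      obtain ⟨y', hy', hb1, _⟩ := this
      exact ⟨y', hy', hb1⟩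
  have hSneS : ∀ n ω, {k | (φ ω ∩ (Metric.ball (x k) (r (n+1))
      ∩ Metric.ball (x (g n ω)) (r n))).Nonempty}.Nonempty := by
    intro n ω
    obtain ⟨y, hy, hyb⟩ := hinv n ω
    obtain ⟨k, hk⟩ := hx.exists_dist_lt y (hrpos (n+1))
    exact ⟨k, y, hy, Metric.mem_ball.2 hk, hyb⟩
  -- measurability of g n
  have hgm : ∀ n, Measurable (g n) := by
    intro n
    induction n with
    | zero =>
      refine measurable_sInf_nat (fun k => ?_) hSne0
      exact hφmeas _ Metric.isOpen_ball
    | succ n ih =>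
      refine measurable_sInf_nat (fun k => ?_) (hSneS n)
      show MeasurableSet {ω | (φ ω ∩ (Metric.ball (x k) (r (n+1))
        ∩ Metric.ball (x (g n ω)) (r n))).Nonempty}
      have : {ω | (φ ω ∩ (Metric.ball (x k) (r (n+1))
            ∩ Metric.ball (x (g n ω)) (r n))).Nonempty}
          = ⋃ m, ({ω | g n ω = m} ∩ {ω | (φ ω ∩ (Metric.ball (x k) (r (n+1))
            ∩ Metric.ball (x m) (r n))).Nonempty}) := by
        ext ω
        simp only [Set.mem_setOf_eq, Set.mem_iUnion, Set.mem_inter_iff]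
        constructor
        · intro h; exact ⟨g n ω, rfl, h⟩
        · rintro ⟨m, hm, h⟩; rwa [hm]
      rw [this]
      refine MeasurableSet.iUnion fun m => (ih (measurableSet_singleton m)).inter ?_
      exact hφmeas _ (Metric.isOpen_ball.inter Metric.isOpen_ball)
  -- the approximating sequence
  set u : ℕ → Ω → S := fun n ω => x (g n ω) with hudef
  have hum : ∀ n, Measurable (u n) := fun n => (measurable_from_top).comp (hgm n)
  have hdist : ∀ n ω, dist (u n ω) (u (n+1) ω) ≤ 2 * (1/2 : ℝ) ^ n := by
    intro n ω
    have := Nat.sInf_mem (hSneS n ω)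
    rw [← hgs n ω] at this
    obtain ⟨y, _, hb1, hb2⟩ := this
    have h1 : dist (u (n+1) ω) y < r (n+1) := by rw [dist_comm]; exact Metric.mem_ball.1 hb1
    have h2 : dist y (u n ω) < r n := Metric.mem_ball.1 hb2
    calc dist (u n ω) (u (n+1) ω) ≤ dist (u n ω) y + dist y (u (n+1) ω) := dist_triangle _ _ _
      _ ≤ r n + r (n+1) := by rw [dist_comm (u n ω) y, dist_comm y (u (n+1) ω)]; linarith
      _ ≤ 2 * (1/2 : ℝ) ^ n := by
          simp only [hrdef, pow_succ]; ring_nf; nlinarith [pow_pos (by norm_num : (0:ℝ) < 1/2) n]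
  have hcau : ∀ ω, CauchySeq fun n => u n ω := by
    intro ω
    exact cauchySeq_of_le_geometric (1/2) 2 (by norm_num) (fun n => hdist n ω)
  choose f hf using fun ω => cauchySeq_tendsto_of_complete (hcau ω)
  have hr0 : Tendsto r atTop (𝓝 0) :=
    tendsto_pow_atTop_nhds_zero_of_lt_one (by norm_num) (by norm_num)
  refine ⟨f, ?_, ?_⟩
  · exact measurable_of_tendsto_metrizable hum (tendsto_pi_nhds.2 hf)
  · intro ω
    set y : ℕ → S := fun n => (hinv n ω).choose with hydef
    have hy : ∀ n, y n ∈ φ ω := fun n => (hinv n ω).choose_spec.1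
    have hyd : ∀ n, dist (y n) (u n ω) < r n := fun n =>
      Metric.mem_ball.1 (hinv n ω).choose_spec.2
    have hyt : Tendsto y atTop (𝓝 (f ω)) := by
      rw [tendsto_iff_dist_tendsto_zero]
      have hb : ∀ n, dist (y n) (f ω) ≤ r n + dist (u n ω) (f ω) := fun n =>
        (dist_triangle _ _ _).trans (by linarith [le_of_lt (hyd n)])
      have hlim : Tendsto (fun n => r n + dist (u n ω) (f ω)) atTop (𝓝 0) := by
        have := (tendsto_iff_dist_tendsto_zero.1 (hf ω))
        simpa using hr0.add this
      exact squeeze_zero (fun n => dist_nonneg) hb hlim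
    exact (hφcl ω).mem_of_tendsto hyt (Eventually.of_forall hy)

end Aux

section Graph

variable {Ω S : Type*} [MeasurableSpace Ω] [MeasurableSpace S]
    [TopologicalSpace S] [PolishSpace S] [BorelSpace S]

lemma graph_meas (φ : Ω → Set S)
    (hφmeas : ∀ U : Set S, IsOpen U → MeasurableSet {ω | (φ ω ∩ U).Nonempty})
    (hφcl : ∀ ω, IsClosed (φ ω)) :
    MeasurableSet {p : Ω × S | p.2 ∈ φ p.1} := by
  rcases isEmpty_or_nonempty S with hS | hS
  · have : {p : Ω × S | p.2 ∈ φ p.1} = ∅ := Set.eq_empty_of_isEmpty _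
    rw [this]; exact MeasurableSet.empty
  letI := TopologicalSpace.upgradeIsCompletelyMetrizable S
  set x : ℕ → S := TopologicalSpace.denseSeq S with hxdef
  have hx : DenseRange x := TopologicalSpace.denseRange_denseSeq S
  set r : ℕ → ℝ := fun n => (1/2 : ℝ) ^ (n+1) with hrdef
  have hrpos : ∀ n, 0 < r n := fun n => by positivity
  have : {p : Ω × S | p.2 ∈ φ p.1}
      = ⋂ n : ℕ, ⋃ k : ℕ,
        ({ω | (φ ω ∩ Metric.ball (x k) (r n)).Nonempty} ×ˢ Metric.ball (x k) (r n)) := by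
    ext ⟨ω, s⟩
    simp only [Set.mem_setOf_eq, Set.mem_iInter, Set.mem_iUnion, Set.mem_prod]
    constructor
    · intro hs n
      obtain ⟨k, hk⟩ := hx.exists_dist_lt s (hrpos n)
      exact ⟨k, ⟨s, hs, Metric.mem_ball.2 hk⟩, Metric.mem_ball.2 hk⟩
    · intro h
      have : ∀ n : ℕ, ∃ y ∈ φ ω, dist y s < 2 * r n := by
        intro n
        obtain ⟨k, ⟨y, hy, hyb⟩, hsb⟩ := h n
        refine ⟨y, hy, ?_⟩
        have h1 : dist y (x k) < r n := Metric.mem_ball.1 hyb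
        have h2 : dist s (x k) < r n := Metric.mem_ball.1 hsb
        calc dist y s ≤ dist y (x k) + dist (x k) s := dist_triangle _ _ _
          _ < 2 * r n := by rw [dist_comm (x k) s]; linarith
      choose y hy hyd using this
      have hyt : Filter.Tendsto y Filter.atTop (nhds s) := by
        rw [tendsto_iff_dist_tendsto_zero]
        have hr0 : Filter.Tendsto (fun n : ℕ => 2 * r n) Filter.atTop (nhds 0) := by
          have h1 : Filter.Tendsto (fun n : ℕ => (1/2 : ℝ) ^ n) Filter.atTop (nhds 0) :=
            tendsto_pow_atTop_nhds_zero_of_lt_one (by norm_num) (by norm_num)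
          have : (fun n : ℕ => 2 * r n) = fun n => (fun m : ℕ => (1/2:ℝ)^m) (n+1) * 2 := by
            funext n; simp [hrdef]; ring
          rw [this]
          simpa using (h1.comp (Filter.tendsto_add_atTop_nat 1)).mul_const 2
        exact squeeze_zero (fun n => dist_nonneg) (fun n => le_of_lt (hyd n)) hr0
      exact (hφcl ω).mem_of_tendsto hyt (Filter.Eventually.of_forall hy)
  rw [this]
  exact MeasurableSet.iInter fun n => MeasurableSet.iUnion fun k =>
    (hφmeas _ Metric.isOpen_ball).prod Metric.isOpen_ball.measurableSet

end Graph



/-- disintegration lemma. Let `Ω` be a measurable space, `S` a Polish space,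
`φ : Ω ⇉ S` a weakly measurable correspondence with nonempty closed values and graph `K`.
For every probability measure `μ` on `Ω × S` with `μ(K) = 1` there exists a stochastic kernel
`Q` from `Ω` to `S` with `μ = μ^Ω ⊗ Q` and `Q(φ(ω)|ω) = 1` for every `ω`; moreover `Q` is
unique `μ^Ω`-almost surely. -/
theorem stmt4 {Ω S : Type*} [MeasurableSpace Ω] [MeasurableSpace S]
    [TopologicalSpace S] [PolishSpace S] [BorelSpace S]
    (φ : Ω → Set S)
    (hφmeas : ∀ U : Set S, IsOpen U → MeasurableSet {ω | (φ ω ∩ U).Nonempty})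
    (hφne : ∀ ω, (φ ω).Nonempty)
    (hφcl : ∀ ω, IsClosed (φ ω))
    (μ : Measure (Ω × S)) [IsProbabilityMeasure μ]
    (hK : μ {p : Ω × S | p.2 ∈ φ p.1} = 1) :
    ∃ Q : Kernel Ω S, IsMarkovKernel Q ∧
      μ = (μ.map Prod.fst) ⊗ₘ Q ∧
      (∀ ω, Q ω (φ ω) = 1) ∧
      (∀ Q' : Kernel Ω S, IsMarkovKernel Q' → μ = (μ.map Prod.fst) ⊗ₘ Q' →
        ∀ᵐ ω ∂(μ.map Prod.fst), Q ω = Q' ω) := by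
  have hKmeas : MeasurableSet {p : Ω × S | p.2 ∈ φ p.1} := graph_meas φ hφmeas hφcl
  haveI : Nonempty (Ω × S) := by
    rcases isEmpty_or_nonempty (Ω × S) with h | h
    · exfalso
      have h1 : μ Set.univ = 1 := measure_univ
      rw [Set.univ_eq_empty_iff.2 h, measure_empty] at h1
      exact zero_ne_one h1
    · exact h
  haveI : Nonempty Ω := ⟨(Classical.arbitrary (Ω × S)).1⟩
  haveI : Nonempty S := ⟨(Classical.arbitrary (Ω × S)).2⟩
  haveI : StandardBorelSpace S := inferInstance
  obtain ⟨f, hf, hfmem⟩ := krn_selection φ hφmeas hφne hφcl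
  have hfst : μ.map Prod.fst = μ.fst := rfl
  set κ := μ.condKernel with hκdef
  have hgm : Measurable fun ω => κ ω (φ ω) :=
    Kernel.measurable_kernel_prodMk_left hKmeas
  have hAmeas : MeasurableSet {ω | κ ω (φ ω) = 1} := hgm (measurableSet_singleton 1)
  have hdis : μ.fst ⊗ₘ κ = μ := μ.disintegrate μ.condKernel
  -- a.e. the conditional kernel gives full mass to φ ω
  have hae : ∀ᵐ ω ∂μ.fst, κ ω (φ ω) = 1 := by
    have hint : ∫⁻ ω, κ ω (φ ω) ∂μ.fst = 1 := by
      have := Measure.compProd_apply (μ := μ.fst) (κ := κ) hKmeas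
      rw [hdis, hK] at this
      exact this.symm
    have hle : ∀ ω, κ ω (φ ω) ≤ 1 := fun ω => prob_le_one
    have hsub : ∫⁻ ω, (1 - κ ω (φ ω)) ∂μ.fst = 0 := by
      rw [lintegral_sub hgm (by rw [hint]; exact ENNReal.one_ne_top) (Filter.Eventually.of_forall hle),
        lintegral_one, measure_univ, hint, tsub_self]
    have := (lintegral_eq_zero_iff (measurable_const.sub hgm)).1 hsub
    filter_upwards [this] with ω hω
    have h1 : (1 : ℝ≥0∞) ≤ κ ω (φ ω) := tsub_eq_zero_iff_le.1 hω
    exact le_antisymm (hle ω) h1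
  set Q : Kernel Ω S := Kernel.piecewise hAmeas κ (Kernel.deterministic f hf) with hQdef
  haveI : IsMarkovKernel Q := by
    rw [hQdef]; infer_instance
  have hQae : Q =ᵐ[μ.fst] κ := by
    filter_upwards [hae] with ω hω
    rw [hQdef, Kernel.piecewise_apply]
    exact if_pos hω
  refine ⟨Q, inferInstance, ?_, ?_, ?_⟩
  · rw [hfst, Measure.compProd_congr hQae, hdis]
  · intro ω
    rw [hQdef, Kernel.piecewise_apply]
    split_ifs with h
    · exact h
    · rw [Kernel.deterministic_apply,
        Measure.dirac_apply' _ (hφcl ω).measurableSet,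
        Set.indicator_of_mem (hfmem ω)]
      rfl
  · intro Q' hQ' heq
    rw [hfst] at heq ⊢
    have h1 : ∀ᵐ ω ∂μ.fst, Q' ω = μ.condKernel ω :=
      eq_condKernel_of_measure_eq_compProd Q' heq
    filter_upwards [h1, hQae] with ω hω1 hω2
    rw [hω2, hω1]
end

section
/- In a discounted Markov game with state space X, compact action spaces A₁,A₂, transition kernel Q, discount β∈(0,1) and initial distribution η, the occupation measure μ_{η,π₁,π₂} of any pair of history-dependent policies (π₁,π₂) satisfies μ(K)=1 and the linear equation μ^X = (1−β)η + β μQ, where μ^X is the X-marginal, μQ(D)=∫ Q(D|x,a₁,a₂)μ(dx,da₁,da₂), and K is the graph of the feasible-action correspondence x ↦ A₁(x)×A₂(x). -/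
open MeasureTheory ProbabilityTheory Filter Topology
open scoped NNReal ENNReal

universe u

/-- The space of histories `H_t = (X × A₁ × A₂)^t × X`, built recursively:
`H_0 = X` and `H_{t+1} = H_t × (A₁ × A₂) × X`. -/
def Hist (X A₁ A₂ : Type u) : ℕ → Type u
  | 0 => X
  | t + 1 => Hist X A₁ A₂ t × (A₁ × A₂) × X

noncomputable instance histMeasurableSpace {X A₁ A₂ : Type u} [MeasurableSpace X]
    [MeasurableSpace A₁] [MeasurableSpace A₂] :
    ∀ t, MeasurableSpace (Hist X A₁ A₂ t)
  | 0 => ‹MeasurableSpace X›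
  | t + 1 =>
    letI := histMeasurableSpace (X := X) (A₁ := A₁) (A₂ := A₂) t
    inferInstanceAs (MeasurableSpace (Hist X A₁ A₂ t × (A₁ × A₂) × X))

/-- The current state `x_t` of a history `h_t ∈ H_t`. -/
def curState {X A₁ A₂ : Type u} : ∀ t, Hist X A₁ A₂ t → X
  | 0 => id
  | _ + 1 => fun h => h.2.2

lemma measurable_curState {X A₁ A₂ : Type u} [MeasurableSpace X]
    [MeasurableSpace A₁] [MeasurableSpace A₂] :
    ∀ t, Measurable (curState (X := X) (A₁ := A₁) (A₂ := A₂) t)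
  | 0 => measurable_id
  | _ + 1 => measurable_snd.comp measurable_snd

/-- The distribution on histories `H_t` induced by the initial distribution `η`, the
transition kernel `Q` and the history-dependent policies `(π₁, π₂)`: the initial state has
distribution `η`, at each stage the actions are drawn independently from `π₁^t(·|h_t)` and
`π₂^t(·|h_t)`, and the next state from `Q(·|x_t, a_t, b_t)`. -/
noncomputable def traj {X A₁ A₂ : Type u} [MeasurableSpace X]
    [MeasurableSpace A₁] [MeasurableSpace A₂]
    (η : Measure X) (Q : Kernel (X × A₁ × A₂) X)
    (π₁ : ∀ t, Kernel (Hist X A₁ A₂ t) A₁) (π₂ : ∀ t, Kernel (Hist X A₁ A₂ t) A₂) :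
    ∀ t, Measure (Hist X A₁ A₂ t)
  | 0 => η
  | t + 1 =>
    (traj η Q π₁ π₂ t) ⊗ₘ
      ((π₁ t ×ₖ π₂ t) ⊗ₖ
        (Q.comap (fun p : Hist X A₁ A₂ t × (A₁ × A₂) => (curState t p.1, p.2))
          (((measurable_curState t).comp measurable_fst).prodMk measurable_snd)))

/-- The joint law of the state-action triple `(X_t, A_t, B_t)` at time `t`. -/
noncomputable def stepLaw {X A₁ A₂ : Type u} [MeasurableSpace X]
    [MeasurableSpace A₁] [MeasurableSpace A₂]
    (η : Measure X) (Q : Kernel (X × A₁ × A₂) X)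
    (π₁ : ∀ t, Kernel (Hist X A₁ A₂ t) A₁) (π₂ : ∀ t, Kernel (Hist X A₁ A₂ t) A₂)
    (t : ℕ) : Measure (X × A₁ × A₂) :=
  (traj η Q π₁ π₂ (t + 1)).map
    (fun h : Hist X A₁ A₂ t × (A₁ × A₂) × X => (curState t h.1, h.2.1))

/-- The occupation measure of the pair of history-dependent policies `(π₁, π₂)` with initial
distribution `η`: `μ_{η,π₁,π₂} = (1-β) ∑_t β^t law(X_t, A_t, B_t)`. -/
noncomputable def occHD {X A₁ A₂ : Type u} [MeasurableSpace X]
    [MeasurableSpace A₁] [MeasurableSpace A₂]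
    (β : ℝ≥0) (η : Measure X) (Q : Kernel (X × A₁ × A₂) X)
    (π₁ : ∀ t, Kernel (Hist X A₁ A₂ t) A₁) (π₂ : ∀ t, Kernel (Hist X A₁ A₂ t) A₂) :
    Measure (X × A₁ × A₂) :=
  Measure.sum fun t : ℕ => ((1 - β) * β ^ t) • stepLaw η Q π₁ π₂ t

section aux

variable {X A₁ A₂ : Type u} [MeasurableSpace X] [MeasurableSpace A₁] [MeasurableSpace A₂]
  (η : Measure X) (Q : Kernel (X × A₁ × A₂) X)
  (π₁ : ∀ t, Kernel (Hist X A₁ A₂ t) A₁) (π₂ : ∀ t, Kernel (Hist X A₁ A₂ t) A₂)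

lemma traj_prob [IsProbabilityMeasure η] [IsMarkovKernel Q]
    (hm₁ : ∀ t, IsMarkovKernel (π₁ t)) (hm₂ : ∀ t, IsMarkovKernel (π₂ t)) :
    ∀ t, IsProbabilityMeasure (traj η Q π₁ π₂ t)
  | 0 => ‹_›
  | t + 1 => by
    haveI := hm₁ t; haveI := hm₂ t
    haveI := traj_prob hm₁ hm₂ t
    show IsProbabilityMeasure ((traj η Q π₁ π₂ t) ⊗ₘ _)
    infer_instance

lemma stepLaw_apply [IsProbabilityMeasure η] [IsMarkovKernel Q]
    (hm₁ : ∀ t, IsMarkovKernel (π₁ t)) (hm₂ : ∀ t, IsMarkovKernel (π₂ t))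
    (t : ℕ) {S : Set (X × A₁ × A₂)} (hS : MeasurableSet S) :
    stepLaw η Q π₁ π₂ t S
      = ∫⁻ h, ((π₁ t ×ₖ π₂ t) h) {a | (curState t h, a) ∈ S} ∂(traj η Q π₁ π₂ t) := by
  haveI := hm₁ t; haveI := hm₂ t
  haveI := traj_prob η Q π₁ π₂ hm₁ hm₂ t
  have hg : Measurable (fun h : Hist X A₁ A₂ t × (A₁ × A₂) × X => (curState t h.1, h.2.1)) :=
    ((measurable_curState t).comp measurable_fst).prodMk (measurable_fst.comp measurable_snd)
  erw [stepLaw, Measure.map_apply hg hS]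
  show (traj η Q π₁ π₂ t ⊗ₘ _) _ = _
  rw [Measure.compProd_apply (hg hS)]
  refine lintegral_congr fun h => ?_
  rw [Kernel.compProd_apply]
  · have hsec : MeasurableSet {a : A₁ × A₂ | (curState t h, a) ∈ S} :=
      measurable_prodMk_left hS
    have : ∀ a : A₁ × A₂,
        (Q.comap (fun p : Hist X A₁ A₂ t × (A₁ × A₂) => (curState t p.1, p.2))
          (((measurable_curState t).comp measurable_fst).prodMk measurable_snd)) (h, a)
          (Prod.mk a ⁻¹'
            (Prod.mk h ⁻¹'
              ((fun h : Hist X A₁ A₂ t × (A₁ × A₂) × X => (curState t h.1, h.2.1)) ⁻¹' S)))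
        = {a : A₁ × A₂ | (curState t h, a) ∈ S}.indicator 1 a := by
      intro a
      by_cases hmem : (curState t h, a) ∈ S
      · have : (Prod.mk a ⁻¹'
            (Prod.mk h ⁻¹'
              ((fun h : Hist X A₁ A₂ t × (A₁ × A₂) × X => (curState t h.1, h.2.1)) ⁻¹' S)))
            = Set.univ := by
          ext x; simpa using hmem
        rw [this]; simp [hmem]
      · have : (Prod.mk a ⁻¹'
            (Prod.mk h ⁻¹'
              ((fun h : Hist X A₁ A₂ t × (A₁ × A₂) × X => (curState t h.1, h.2.1)) ⁻¹' S)))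
            = ∅ := by
          ext x; simpa using hmem
        rw [this]; simp [hmem]
    rw [← lintegral_indicator_one hsec]
    exact lintegral_congr this
  · exact measurable_prodMk_left (hg hS)

lemma stepLaw_lintegral [IsProbabilityMeasure η] [IsMarkovKernel Q]
    (hm₁ : ∀ t, IsMarkovKernel (π₁ t)) (hm₂ : ∀ t, IsMarkovKernel (π₂ t))
    (t : ℕ) {f : X × A₁ × A₂ → ℝ≥0∞} (hf : Measurable f) :
    ∫⁻ q, f q ∂(stepLaw η Q π₁ π₂ t)
      = ∫⁻ h, ∫⁻ a, f (curState t h, a) ∂((π₁ t ×ₖ π₂ t) h) ∂(traj η Q π₁ π₂ t) := by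
  haveI := hm₁ t; haveI := hm₂ t
  haveI := traj_prob η Q π₁ π₂ hm₁ hm₂ t
  have hg : Measurable (fun h : Hist X A₁ A₂ t × (A₁ × A₂) × X => (curState t h.1, h.2.1)) :=
    ((measurable_curState t).comp measurable_fst).prodMk (measurable_fst.comp measurable_snd)
  erw [stepLaw, lintegral_map hf hg]
  show ∫⁻ h, _ ∂(traj η Q π₁ π₂ t ⊗ₘ _) = _
  have hfg : Measurable fun h : Hist X A₁ A₂ t × (A₁ × A₂) × X =>
      f (curState t h.1, h.2.1) := hf.comp hg
  rw [Measure.lintegral_compProd hfg]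
  refine lintegral_congr fun h => ?_
  rw [Kernel.lintegral_compProd]
  · refine lintegral_congr fun a => ?_
    simp
  · exact hf.comp (Measurable.prodMk (measurable_const (a := curState t h)) measurable_fst)

lemma stepLaw_fst [IsProbabilityMeasure η] [IsMarkovKernel Q]
    (hm₁ : ∀ t, IsMarkovKernel (π₁ t)) (hm₂ : ∀ t, IsMarkovKernel (π₂ t))
    (t : ℕ) {D : Set X} (hD : MeasurableSet D) :
    stepLaw η Q π₁ π₂ t (Prod.fst ⁻¹' D)
      = (traj η Q π₁ π₂ t).map (curState t) D := by
  haveI := hm₁ t; haveI := hm₂ t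
  haveI := traj_prob η Q π₁ π₂ hm₁ hm₂ t
  rw [stepLaw_apply η Q π₁ π₂ hm₁ hm₂ t (measurable_fst hD),
    Measure.map_apply (measurable_curState t) hD,
    ← lintegral_indicator_one ((measurable_curState t) hD)]
  refine lintegral_congr fun h => ?_
  by_cases hmem : curState t h ∈ D
  · have : {a : A₁ × A₂ | (curState t h, a) ∈ Prod.fst ⁻¹' D} = Set.univ := by
      ext a; simpa using hmem
    rw [this]; simp [hmem]
  · have : {a : A₁ × A₂ | (curState t h, a) ∈ Prod.fst ⁻¹' D} = ∅ := by
      ext a; simpa using hmem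
    rw [this]; simp [hmem]

lemma stepLaw_bind [IsProbabilityMeasure η] [IsMarkovKernel Q]
    (hm₁ : ∀ t, IsMarkovKernel (π₁ t)) (hm₂ : ∀ t, IsMarkovKernel (π₂ t))
    (t : ℕ) {D : Set X} (hD : MeasurableSet D) :
    ∫⁻ q, Q q D ∂(stepLaw η Q π₁ π₂ t)
      = (traj η Q π₁ π₂ (t + 1)).map (curState (t + 1)) D := by
  haveI := hm₁ t; haveI := hm₂ t
  haveI := traj_prob η Q π₁ π₂ hm₁ hm₂ t
  rw [stepLaw_lintegral η Q π₁ π₂ hm₁ hm₂ t (Q.measurable_coe hD),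
    Measure.map_apply (measurable_curState (t + 1)) hD]
  show _ = (traj η Q π₁ π₂ t ⊗ₘ _) _
  rw [Measure.compProd_apply ((measurable_curState (t + 1)) hD)]
  refine lintegral_congr fun h => ?_
  rw [Kernel.compProd_apply (measurable_prodMk_left ((measurable_curState (t + 1)) hD))]
  refine lintegral_congr fun a => ?_
  rw [Kernel.comap_apply]
  rfl

end aux

lemma graph_meas_s6 {X A : Type u} [MeasurableSpace X] [MetricSpace A] [CompactSpace A]
    [MeasurableSpace A] [BorelSpace A]
    (F : X → Set A) (hmeas : ∀ U : Set A, IsOpen U → MeasurableSet {x | (F x ∩ U).Nonempty})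
    (hne : ∀ x, (F x).Nonempty) (hcpt : ∀ x, IsCompact (F x)) :
    MeasurableSet {p : X × A | p.2 ∈ F p.1} := by
  have hf : Measurable (Function.uncurry fun a x => Metric.infDist a (F x)) := by
    refine measurable_uncurry_of_continuous_of_measurable (fun x => ?_) (fun a => ?_)
    · exact Metric.continuous_infDist_pt (F x)
    · refine measurable_of_Iio fun r => ?_
      have : (fun x => Metric.infDist a (F x)) ⁻¹' Set.Iio r
          = {x | (F x ∩ Metric.ball a r).Nonempty} := by
        ext x
        simp only [Set.mem_preimage, Set.mem_Iio, Set.mem_setOf_eq]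
        rw [Metric.infDist_lt_iff (hne x)]
        constructor
        · rintro ⟨y, hy, hd⟩; exact ⟨y, hy, by simpa [dist_comm] using hd⟩
        · rintro ⟨y, hy, hd⟩; exact ⟨y, hy, by simpa [dist_comm] using hd⟩
      rw [this]; exact hmeas _ Metric.isOpen_ball
  have : {p : X × A | p.2 ∈ F p.1}
      = (fun p : X × A =>
          Function.uncurry (fun a x => Metric.infDist a (F x)) (p.2, p.1)) ⁻¹' {0} := by
    ext ⟨x, a⟩
    simp only [Set.mem_setOf_eq, Set.mem_preimage, Function.uncurry, Set.mem_singleton_iff]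
    rw [← (hcpt x).isClosed.mem_iff_infDist_zero (hne x)]
  rw [this]
  exact (hf.comp (measurable_snd.prodMk measurable_fst)) (measurableSet_singleton 0)

/-- In the discounted Markov game, the occupation measure `μ_{η,π₁,π₂}` of
any pair of (feasible) history-dependent policies is carried by the graph `K` of the
feasible-action correspondence and satisfies the linear equation
`μ^X = (1-β) η + β μQ`. -/
theorem stmt6 {X A₁ A₂ : Type u} [MeasurableSpace X]
    [MetricSpace A₁] [CompactSpace A₁] [MeasurableSpace A₁] [BorelSpace A₁]
    [MetricSpace A₂] [CompactSpace A₂] [MeasurableSpace A₂] [BorelSpace A₂]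
    (β : ℝ≥0) (hβ0 : 0 < β) (hβ1 : β < 1)
    (η : Measure X) [IsProbabilityMeasure η]
    (Q : Kernel (X × A₁ × A₂) X) [IsMarkovKernel Q]
    -- feasible-action correspondences
    (Fa₁ : X → Set A₁) (Fa₂ : X → Set A₂)
    (hFa₁meas : ∀ U : Set A₁, IsOpen U → MeasurableSet {x | (Fa₁ x ∩ U).Nonempty})
    (hFa₂meas : ∀ U : Set A₂, IsOpen U → MeasurableSet {x | (Fa₂ x ∩ U).Nonempty})
    (hFa₁ne : ∀ x, (Fa₁ x).Nonempty) (hFa₂ne : ∀ x, (Fa₂ x).Nonempty)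
    (hFa₁cpt : ∀ x, IsCompact (Fa₁ x)) (hFa₂cpt : ∀ x, IsCompact (Fa₂ x))
    -- history-dependent policies of the two players
    (π₁ : ∀ t, Kernel (Hist X A₁ A₂ t) A₁) (π₂ : ∀ t, Kernel (Hist X A₁ A₂ t) A₂)
    (hm₁ : ∀ t, IsMarkovKernel (π₁ t)) (hm₂ : ∀ t, IsMarkovKernel (π₂ t))
    (hfeas₁ : ∀ t h, π₁ t h (Fa₁ (curState t h)) = 1)
    (hfeas₂ : ∀ t h, π₂ t h (Fa₂ (curState t h)) = 1) :
    occHD β η Q π₁ π₂ {q : X × A₁ × A₂ | q.2.1 ∈ Fa₁ q.1 ∧ q.2.2 ∈ Fa₂ q.1} = 1 ∧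
    (occHD β η Q π₁ π₂).map Prod.fst
      = (1 - β) • η + β • (occHD β η Q π₁ π₂).bind (fun q => Q q) := by
  have hβ1' : (β : ℝ≥0∞) < 1 := by exact_mod_cast hβ1
  have hcoe : ((1 - β : ℝ≥0) : ℝ≥0∞) = 1 - (β : ℝ≥0∞) := by
    rw [ENNReal.coe_sub, ENNReal.coe_one]
  have hne0 : (1 : ℝ≥0∞) - β ≠ 0 := by
    simp only [ne_eq, tsub_eq_zero_iff_le, not_le]; exact hβ1'
  have hneTop : (1 : ℝ≥0∞) - β ≠ ⊤ :=
    ne_top_of_le_ne_top ENNReal.one_ne_top tsub_le_self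
  have hocc : occHD β η Q π₁ π₂
      = Measure.sum fun t : ℕ =>
          (((1 - β : ℝ≥0) : ℝ≥0∞) * (β : ℝ≥0∞) ^ t) • stepLaw η Q π₁ π₂ t := by
    unfold occHD
    congr 1
  constructor
  · -- part 1
    set S : Set (X × A₁ × A₂) := {q | q.2.1 ∈ Fa₁ q.1 ∧ q.2.2 ∈ Fa₂ q.1} with hSdef
    have hS : MeasurableSet S := by
      have h1 := graph_meas_s6 Fa₁ hFa₁meas hFa₁ne hFa₁cpt
      have h2 := graph_meas_s6 Fa₂ hFa₂meas hFa₂ne hFa₂cpt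
      have : S = ((fun q : X × A₁ × A₂ => (q.1, q.2.1)) ⁻¹' {p | p.2 ∈ Fa₁ p.1})
          ∩ ((fun q : X × A₁ × A₂ => (q.1, q.2.2)) ⁻¹' {p | p.2 ∈ Fa₂ p.1}) := rfl
      rw [this]
      exact (h1.preimage (measurable_fst.prodMk (measurable_fst.comp measurable_snd))).inter
        (h2.preimage (measurable_fst.prodMk (measurable_snd.comp measurable_snd)))
    have hstep : ∀ t, stepLaw η Q π₁ π₂ t S = 1 := by
      intro t
      haveI := hm₁ t; haveI := hm₂ t
      haveI := traj_prob η Q π₁ π₂ hm₁ hm₂ t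
      rw [stepLaw_apply η Q π₁ π₂ hm₁ hm₂ t hS]
      have hpt : ∀ h, ((π₁ t ×ₖ π₂ t) h) {a | (curState t h, a) ∈ S} = 1 := by
        intro h
        have hset : {a : A₁ × A₂ | (curState t h, a) ∈ S}
            = (Fa₁ (curState t h)) ×ˢ (Fa₂ (curState t h)) := rfl
        rw [hset, Kernel.prod_apply, Measure.prod_prod, hfeas₁ t h, hfeas₂ t h, mul_one]
      simp_rw [hpt, lintegral_one, measure_univ]
    rw [hocc, Measure.sum_apply _ hS]
    simp_rw [Measure.smul_apply, hstep, smul_eq_mul, mul_one]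
    rw [ENNReal.tsum_mul_left, ENNReal.tsum_geometric, hcoe,
      ENNReal.mul_inv_cancel hne0 hneTop]
  · -- part 2
    refine Measure.ext fun D hD => ?_
    have hQD : Measurable fun q : X × A₁ × A₂ => Q q D := Q.measurable_coe hD
    have hLHS : (occHD β η Q π₁ π₂).map Prod.fst D
        = ∑' t : ℕ, ((1 - β : ℝ≥0) : ℝ≥0∞) * (β : ℝ≥0∞) ^ t *
            ((traj η Q π₁ π₂ t).map (curState t) D) := by
      rw [Measure.map_apply measurable_fst hD, hocc,
        Measure.sum_apply _ (measurable_fst hD)]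
      refine tsum_congr fun t => ?_
      rw [Measure.smul_apply, stepLaw_fst η Q π₁ π₂ hm₁ hm₂ t hD, smul_eq_mul]
    have hbind : (occHD β η Q π₁ π₂).bind (fun q => Q q) D
        = ∑' t : ℕ, ((1 - β : ℝ≥0) : ℝ≥0∞) * (β : ℝ≥0∞) ^ t *
            ((traj η Q π₁ π₂ (t + 1)).map (curState (t + 1)) D) := by
      rw [Measure.bind_apply hD (Kernel.measurable Q).aemeasurable, hocc,
        lintegral_sum_measure]
      refine tsum_congr fun t => ?_
      rw [lintegral_smul_measure, stepLaw_bind η Q π₁ π₂ hm₁ hm₂ t hD, smul_eq_mul]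
    have hν0 : (traj η Q π₁ π₂ 0).map (curState 0) D = η D := by
      show (η.map id) D = η D
      rw [Measure.map_id]
    rw [Measure.add_apply, Measure.smul_apply, Measure.smul_apply, hbind, hLHS,
      ENNReal.smul_def, ENNReal.smul_def, smul_eq_mul, smul_eq_mul]
    rw [tsum_eq_zero_add' ENNReal.summable]
    rw [pow_zero, mul_one, hν0]
    congr 1
    rw [← ENNReal.tsum_mul_left]
    refine tsum_congr fun t => ?_
    ring
end
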